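/- Let A = (A₁ A₂) ∈ ℝ^{m×n} with A₁ ∈ ℝ^{m×k}, let W = (W₁ 𝟙) ∈ ℝ^{m×n} with W₁ ∈ ℝ^{m×k}, and let k ≤ r. Then the infimum of ‖(A − (X₁ X₂)) ⊙ W‖_F² over all X₁ ∈ ℝ^{m×k} with rank(X₁) = k and X₂ ∈ ℝ^{m×(n−k)} with rank(X₁ X₂) ≤ r equals the infimum of ‖(A₁ − X₁) ⊙ W₁‖_F² + ‖A₂ − X₁C − BD‖_F² over all X₁ ∈ ℝ^{m×k} with rank(X₁) = k, C ∈ ℝ^{k×(n−k)}, B ∈ ℝ^{m×(r−k)}, D ∈ ℝ^{(r−k)×(n−k)}. (The weighted low-rank approximation problem (7) with weight W = (W₁ 𝟙) reduces to the factored problem (9).) -/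

import Mathlib

open Matrix

/-- Frobenius norm of a real matrix. -/
noncomputable def frobNorm {m n : Type*} [Fintype m] [Fintype n] (A : Matrix m n ℝ) : ℝ :=
  Real.sqrt (∑ i, ∑ j, (A i j) ^ 2)


lemma col_mem_range (m k l : ℕ) (X₁ : Matrix (Fin m) (Fin k) ℝ) (X₂ : Matrix (Fin m) (Fin l) ℝ)
    (j : Fin l) :
    (fun i => X₂ i j) ∈ LinearMap.range (Matrix.fromCols X₁ X₂).mulVecLin := by
  refine ⟨Sum.elim 0 (Pi.single j 1), ?_⟩
  ext i
  simp [Matrix.mulVecLin_apply, Matrix.fromCols_mulVec_sumElim, Matrix.mulVec, dotProduct,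
    Pi.single_apply, mul_ite]

lemma X1_mem_range (m k l : ℕ) (X₁ : Matrix (Fin m) (Fin k) ℝ) (X₂ : Matrix (Fin m) (Fin l) ℝ) :
    LinearMap.range X₁.mulVecLin ≤ LinearMap.range (Matrix.fromCols X₁ X₂).mulVecLin := by
  rintro x ⟨v, rfl⟩
  refine ⟨Sum.elim v 0, ?_⟩
  simp [Matrix.mulVecLin_apply, Matrix.fromCols_mulVec_sumElim]


set_option maxHeartbeats 1000000 in
set_option synthInstance.maxHeartbeats 1000000 in
lemma decompose (m k l r : ℕ) (hkr : k ≤ r)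
    (X₁ : Matrix (Fin m) (Fin k) ℝ) (X₂ : Matrix (Fin m) (Fin l) ℝ)
    (hk : X₁.rank = k) (hr : (Matrix.fromCols X₁ X₂).rank ≤ r) :
    ∃ (C : Matrix (Fin k) (Fin l) ℝ) (B : Matrix (Fin m) (Fin (r - k)) ℝ)
      (D : Matrix (Fin (r - k)) (Fin l) ℝ), X₂ = X₁ * C + B * D := by
  classical
  set T : Submodule ℝ (Fin m → ℝ) := LinearMap.range (Matrix.fromCols X₁ X₂).mulVecLin with hT
  set U : Submodule ℝ (Fin m → ℝ) := LinearMap.range X₁.mulVecLin with hU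
  have hUT : U ≤ T := X1_mem_range m k l X₁ X₂
  set U' : Submodule ℝ T := U.comap T.subtype with hU'
  obtain ⟨S, hS⟩ := U'.exists_isCompl
  haveI : Module.Free ℝ S := Module.Free.of_divisionRing ℝ S
  have hfinU' : Module.finrank ℝ U' = k := by
    rw [(Submodule.comapSubtypeEquivOfLe hUT).finrank_eq]
    exact hk
  have hsum : Module.finrank ℝ U' + Module.finrank ℝ S = Module.finrank ℝ T :=
    Submodule.finrank_add_eq_of_isCompl hS
  set s := Module.finrank ℝ S with hs_def
  have hsle : s ≤ r - k := by
    have hTr : Module.finrank ℝ T ≤ r := hr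
    omega
  set b : Module.Basis (Fin s) ℝ S := Module.finBasis ℝ S with hb
  have hcol : ∀ j : Fin l, (fun i => X₂ i j) ∈ T := fun j => col_mem_range m k l X₁ X₂ j
  have hdec : ∀ j : Fin l, ∃ (c : Fin k → ℝ) (v : S),
      ∀ i, X₂ i j = X₁.mulVec c i + ((v : T) : Fin m → ℝ) i := by
    intro j
    have hmem : (⟨fun i => X₂ i j, hcol j⟩ : T) ∈ U' ⊔ S := by
      rw [hS.sup_eq_top]; trivial
    obtain ⟨u, hu, v, hv, huv⟩ := Submodule.mem_sup.mp hmem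
    have hu' : ((u : T) : Fin m → ℝ) ∈ U := hu
    obtain ⟨c, hc⟩ := hu'
    refine ⟨c, ⟨v, hv⟩, fun i => ?_⟩
    have h1 := congrArg (fun (z : T) => (z : Fin m → ℝ) i) huv
    simp only at h1
    rw [← h1]
    have h2 : ((u + v : T) : Fin m → ℝ) i = ((u : T) : Fin m → ℝ) i + ((v : T) : Fin m → ℝ) i := rfl
    rw [h2, ← hc]
    rfl
  choose c v hcv using hdec
  set CC : Matrix (Fin k) (Fin l) ℝ := Matrix.of (fun t j => c j t) with hCC
  set BB : Matrix (Fin m) (Fin (r - k)) ℝ := Matrix.of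
    (fun i i' => if h : (i' : ℕ) < s then (((b ⟨i', h⟩ : S) : T) : Fin m → ℝ) i else 0) with hBB
  set DD : Matrix (Fin (r - k)) (Fin l) ℝ := Matrix.of
    (fun i' j => if h : (i' : ℕ) < s then b.repr (v j) ⟨i', h⟩ else 0) with hDD
  refine ⟨CC, BB, DD, ?_⟩
  ext i j
  rw [Matrix.add_apply, hcv j i]
  have hA : X₁.mulVec (c j) i = (X₁ * CC) i j := by
    simp [hCC, Matrix.mul_apply, Matrix.mulVec, dotProduct]
  have hBD : ((v j : T) : Fin m → ℝ) i = (BB * DD) i j := by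
    rw [hBB, hDD]
    set E : S →ₗ[ℝ] ℝ :=
      (LinearMap.proj i : (Fin m → ℝ) →ₗ[ℝ] ℝ).comp (T.subtype.comp S.subtype) with hE
    have hL : ((v j : T) : Fin m → ℝ) i = E (v j) := rfl
    set g : ℕ → ℝ := fun x =>
      if h : x < s then (((b ⟨x, h⟩ : S) : T) : Fin m → ℝ) i * b.repr (v j) ⟨x, h⟩ else 0 with hg
    rw [hL, ← b.sum_repr (v j), map_sum, Matrix.mul_apply]
    simp only [Matrix.of_apply, _root_.map_smul, smul_eq_mul]
    have h1 : ∀ x : Fin (r - k),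
        (if h : (x : ℕ) < s then (((b ⟨x, h⟩ : S) : T) : Fin m → ℝ) i else 0) *
          (if h : (x : ℕ) < s then b.repr (v j) ⟨x, h⟩ else 0) = g ↑x := by
      intro x
      by_cases h : (x : ℕ) < s <;> simp [hg, h]
    rw [Finset.sum_congr rfl (fun x _ => h1 x), Fin.sum_univ_eq_sum_range g,
      ← Finset.sum_subset (Finset.range_subset_range.2 hsle)
        (fun x _ hx => dif_neg (by simpa using hx)),
      ← Fin.sum_univ_eq_sum_range g]
    refine Finset.sum_congr rfl (fun x _ => ?_)
    rw [hg]
    simp only [x.isLt, dif_pos, Fin.eta]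
    rw [mul_comm]
    rfl
  rw [hA, hBD]

lemma rank_bound (m k l r : ℕ) (hkr : k ≤ r)
    (X₁ : Matrix (Fin m) (Fin k) ℝ) (C : Matrix (Fin k) (Fin l) ℝ)
    (B : Matrix (Fin m) (Fin (r - k)) ℝ) (D : Matrix (Fin (r - k)) (Fin l) ℝ) :
    (Matrix.fromCols X₁ (X₁ * C + B * D)).rank ≤ r := by
  have hfac : Matrix.fromCols X₁ (X₁ * C + B * D) =
      (Matrix.fromCols X₁ B) * (Matrix.fromBlocks 1 C 0 D) := by
    rw [Matrix.fromCols_mul_fromBlocks]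
    simp
  rw [hfac]
  calc ((Matrix.fromCols X₁ B) * (Matrix.fromBlocks 1 C 0 D)).rank
      ≤ (Matrix.fromCols X₁ B).rank := Matrix.rank_mul_le_left _ _
    _ ≤ Fintype.card (Fin k ⊕ Fin (r - k)) := Matrix.rank_le_card_width _
    _ = r := by simp; omega

lemma frob_sq {m n : Type*} [Fintype m] [Fintype n] (A : Matrix m n ℝ) :
    (frobNorm A) ^ 2 = ∑ i, ∑ j, (A i j) ^ 2 := by
  rw [frobNorm, Real.sq_sqrt]
  positivity

lemma frob_split (m k l : ℕ)
    (A₁ X₁ W₁ : Matrix (Fin m) (Fin k) ℝ) (A₂ X₂ : Matrix (Fin m) (Fin l) ℝ) :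
    (frobNorm (Matrix.hadamard
      (Matrix.fromCols A₁ A₂ - Matrix.fromCols X₁ X₂)
      (Matrix.fromCols W₁ (Matrix.of fun (_ : Fin m) (_ : Fin l) => (1 : ℝ))))) ^ 2
    = (frobNorm (Matrix.hadamard (A₁ - X₁) W₁)) ^ 2 + (frobNorm (A₂ - X₂)) ^ 2 := by
  rw [frob_sq, frob_sq, frob_sq, ← Finset.sum_add_distrib]
  refine Finset.sum_congr rfl (fun i _ => ?_)
  rw [Fintype.sum_sum_type]
  simp [Matrix.fromCols, Matrix.hadamard]

/-- The weighted low-rank approximation problem with block weight `W = (W₁ 𝟙)` reduces to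
the factored problem: the infimum of `‖(A − (X₁ X₂)) ⊙ W‖_F²` over `X₁` of rank `k` and
`X₂` with `rank (X₁ X₂) ≤ r` equals the infimum of
`‖(A₁ − X₁) ⊙ W₁‖_F² + ‖A₂ − X₁ C − B D‖_F²` over `X₁` of rank `k` and factors
`C ∈ ℝ^{k×(n−k)}`, `B ∈ ℝ^{m×(r−k)}`, `D ∈ ℝ^{(r−k)×(n−k)}`. -/
theorem wlr_reduction
    (m k l r : ℕ) (hkr : k ≤ r)
    (A₁ W₁ : Matrix (Fin m) (Fin k) ℝ)
    (A₂ : Matrix (Fin m) (Fin l) ℝ) :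
    sInf { x : ℝ | ∃ (X₁ : Matrix (Fin m) (Fin k) ℝ) (X₂ : Matrix (Fin m) (Fin l) ℝ),
        X₁.rank = k ∧ (Matrix.fromCols X₁ X₂).rank ≤ r ∧
        x = (frobNorm (Matrix.hadamard
          (Matrix.fromCols A₁ A₂ - Matrix.fromCols X₁ X₂)
          (Matrix.fromCols W₁ (Matrix.of fun (_ : Fin m) (_ : Fin l) => (1 : ℝ))))) ^ 2 } =
    sInf { x : ℝ | ∃ (X₁ : Matrix (Fin m) (Fin k) ℝ) (C : Matrix (Fin k) (Fin l) ℝ)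
        (B : Matrix (Fin m) (Fin (r - k)) ℝ) (D : Matrix (Fin (r - k)) (Fin l) ℝ),
        X₁.rank = k ∧
        x = (frobNorm (Matrix.hadamard (A₁ - X₁) W₁)) ^ 2 +
          (frobNorm (A₂ - (X₁ * C + B * D))) ^ 2 } := by
  congr 1
  ext x
  constructor
  · rintro ⟨X₁, X₂, hk, hr, rfl⟩
    obtain ⟨C, B, D, hX2⟩ := decompose m k l r hkr X₁ X₂ hk hr
    exact ⟨X₁, C, B, D, hk, by rw [frob_split, hX2]⟩
  · rintro ⟨X₁, C, B, D, hk, rfl⟩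
    exact ⟨X₁, X₁ * C + B * D, hk, rank_bound m k l r hkr X₁ C B D,
      (frob_split m k l A₁ X₁ W₁ A₂ (X₁ * C + B * D)).symm⟩
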